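/- Let n ≥ 1, d ≥ 2, and consider the curve c : ℝ → ℝ[x₀,…,x_n]_(d) given by c(t) = (cos(t·d^{-1/2})·x₀ + sin(t·d^{-1/2})·x₁)^d, which lies on the Bombieri–Weyl unit sphere and is a unit-speed curve (‖c'(t)‖_BW = 1 for all t). Then c''(0) = −x₀^d + (d−1)·x₀^{d-2}x₁², we have ⟨c''(0), c(0)⟩_BW = −1, and the component of c''(0) orthogonal to c(0) satisfies ‖c''(0) − ⟨c''(0),c(0)⟩_BW · c(0)‖_BW = √(2(d−1)/d). -/

import Mathlib

open MvPolynomial Finset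

/-- The Bombieri–Weyl inner product on real polynomials in `n+1` variables, for degree `d`. -/
noncomputable def bwInner (n d : ℕ) (p q : MvPolynomial (Fin (n + 1)) ℝ) : ℝ :=
  ∑ α ∈ p.support ∪ q.support,
    ((∏ i, ((α i).factorial : ℝ)) / (d.factorial : ℝ)) * coeff α p * coeff α q

/-- The curve `c(t) = (cos(t·d^{-1/2})·x₀ + sin(t·d^{-1/2})·x₁)^d` on the spherical Veronese
surface. -/
noncomputable def veroneseCurve (n d : ℕ) (t : ℝ) : MvPolynomial (Fin (n + 1)) ℝ :=
  (C (Real.cos (t / Real.sqrt d)) * X 0 + C (Real.sin (t / Real.sqrt d)) * X 1) ^ d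

/-- The derivative of `veroneseCurve`:
`c'(t) = √d · ℓ(t)^{d-1} · (-sin(t/√d)·x₀ + cos(t/√d)·x₁)`. -/
noncomputable def veroneseCurveDeriv (n d : ℕ) (t : ℝ) : MvPolynomial (Fin (n + 1)) ℝ :=
  Real.sqrt d •
    ((C (Real.cos (t / Real.sqrt d)) * X 0 + C (Real.sin (t / Real.sqrt d)) * X 1) ^ (d - 1) *
      (C (-Real.sin (t / Real.sqrt d)) * X 0 + C (Real.cos (t / Real.sqrt d)) * X 1))

/-! ### Auxiliary machinery -/

noncomputable def nuBW (n : ℕ) (a b : ℕ) : Fin (n+1) →₀ ℕ :=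
  Finsupp.single 0 a + Finsupp.single 1 b

noncomputable def DBW (d k : ℕ) (t : ℝ) : ℝ :=
  ((d.choose k : ℝ) / Real.sqrt d) *
    (-(k:ℝ) * Real.cos (t / Real.sqrt d) ^ (k-1) * Real.sin (t / Real.sqrt d) ^ ((d-k)+1)
      + ((d-k : ℕ) : ℝ) * Real.cos (t / Real.sqrt d) ^ (k+1) * Real.sin (t / Real.sqrt d) ^ (d-k-1))

noncomputable def pfunBW (d k : ℕ) : ℝ :=
  if k = d-2 then (d:ℝ)-1 else if k = d then -1 else 0

noncomputable def SBW (n d : ℕ) : Finset (Fin (n+1) →₀ ℕ) :=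
  (range (d+1)).image (fun k => nuBW n k (d-k))

noncomputable def BsumBW (n d : ℕ) (p q : MvPolynomial (Fin (n+1)) ℝ) : ℝ :=
  ∑ α ∈ SBW n d, ((∏ i, ((α i).factorial : ℝ)) / (d.factorial : ℝ)) * coeff α p * coeff α q

lemma nuBW_apply0 {n : ℕ} (h01 : (0 : Fin (n+1)) ≠ 1) (a b : ℕ) : nuBW n a b 0 = a := by
  simp [nuBW, Finsupp.single_apply, h01.symm]

lemma nuBW_apply1 {n : ℕ} (h01 : (0 : Fin (n+1)) ≠ 1) (a b : ℕ) : nuBW n a b 1 = b := by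
  simp [nuBW, Finsupp.single_apply, h01]

lemma nuBW_inj {n : ℕ} (h01 : (0 : Fin (n+1)) ≠ 1) {a b a' b' : ℕ}
    (h : nuBW n a b = nuBW n a' b') : a = a' ∧ b = b' := by
  constructor
  · have := DFunLike.congr_fun h 0
    simpa [nuBW_apply0 h01] using this
  · have := DFunLike.congr_fun h 1
    simpa [nuBW_apply1 h01] using this

lemma nuBW_prod_factorial {n : ℕ} (h01 : (0 : Fin (n+1)) ≠ 1) (a b : ℕ) :
    (∏ i, ((nuBW n a b i).factorial : ℝ)) = (a.factorial : ℝ) * b.factorial := by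
  classical
  have h0 : (0 : Fin (n+1)) ∈ (univ : Finset (Fin (n+1))) := mem_univ _
  rw [← Finset.mul_prod_erase univ _ h0]
  have h1 : (1 : Fin (n+1)) ∈ (univ : Finset (Fin (n+1))).erase 0 := by
    simp [h01.symm]
  rw [← Finset.mul_prod_erase _ _ h1]
  rw [nuBW_apply0 h01, nuBW_apply1 h01]
  have : ∀ i ∈ ((univ : Finset (Fin (n+1))).erase 0).erase 1,
      ((nuBW n a b i).factorial : ℝ) = 1 := by
    intro i hi
    simp only [mem_erase] at hi
    have : nuBW n a b i = 0 := by
      simp [nuBW, Finsupp.single_apply, (Ne.symm hi.2.1 : ¬ (0:Fin (n+1)) = i),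
        (Ne.symm hi.1 : ¬ (1:Fin (n+1)) = i)]
    simp [this]
  rw [Finset.prod_congr rfl this]
  simp [mul_assoc]

lemma pow_expand (n : ℕ) (u v : ℝ) (m : ℕ) :
    (C u * X 0 + C v * X 1 : MvPolynomial (Fin (n+1)) ℝ) ^ m
      = ∑ k ∈ range (m+1), monomial (nuBW n k (m-k)) ((m.choose k : ℝ) * u^k * v^(m-k)) := by
  rw [add_pow]
  refine Finset.sum_congr rfl fun k hk => ?_
  rw [mul_pow, mul_pow, ← C_pow, ← C_pow, X_pow_eq_monomial, X_pow_eq_monomial,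
    C_mul_monomial, C_mul_monomial, monomial_mul,
    show ((m.choose k : MvPolynomial (Fin (n+1)) ℝ)) = C ((m.choose k : ℝ)) by simp,
    mul_comm _ (C ((m.choose k : ℝ))), C_mul_monomial]
  congr 1
  ring

lemma bwInner_eq_sum {n d : ℕ} {S : Finset (Fin (n+1) →₀ ℕ)}
    {p q : MvPolynomial (Fin (n+1)) ℝ} (hp : p.support ⊆ S) (hq : q.support ⊆ S) :
    bwInner n d p q
      = ∑ α ∈ S, ((∏ i, ((α i).factorial : ℝ)) / (d.factorial : ℝ)) * coeff α p * coeff α q := by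
  refine Finset.sum_subset (union_subset hp hq) fun α _ hα => ?_
  rcases Finset.notMem_union.mp hα with ⟨h1, _⟩
  rw [MvPolynomial.notMem_support_iff.mp h1]
  ring

lemma support_monsum {n d : ℕ} (a : ℕ → ℝ) :
    (∑ k ∈ range (d+1), monomial (nuBW n k (d-k)) (a k)).support ⊆ SBW n d := by
  classical
  refine (MvPolynomial.support_sum).trans ?_
  intro α hα
  rcases Finset.mem_biUnion.mp hα with ⟨k, hk, hk2⟩
  have := MvPolynomial.support_monomial (s := nuBW n k (d-k)) (a := a k) ▸ hk2
  by_cases h : a k = 0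
  · simp [h] at this
  · simp [h] at this
    exact Finset.mem_image.mpr ⟨k, hk, this.symm⟩

lemma coeff_monsum {n d : ℕ} (h01 : (0 : Fin (n+1)) ≠ 1) (a : ℕ → ℝ) {k : ℕ}
    (hk : k ∈ range (d+1)) :
    coeff (nuBW n k (d-k)) (∑ j ∈ range (d+1), monomial (nuBW n j (d-j)) (a j)) = a k := by
  classical
  rw [coeff_sum, Finset.sum_eq_single k]
  · simp [coeff_monomial]
  · intro j hj hjk
    rw [coeff_monomial, if_neg]
    intro h
    exact hjk (nuBW_inj h01 h).1
  · exact fun h => absurd hk h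

lemma bwInner_monsum {n d : ℕ} (h01 : (0 : Fin (n+1)) ≠ 1) (a b : ℕ → ℝ) :
    bwInner n d (∑ k ∈ range (d+1), monomial (nuBW n k (d-k)) (a k))
        (∑ k ∈ range (d+1), monomial (nuBW n k (d-k)) (b k))
      = ∑ k ∈ range (d+1),
          ((k.factorial : ℝ) * ((d-k).factorial : ℝ) / (d.factorial : ℝ)) * a k * b k := by
  classical
  rw [bwInner_eq_sum (support_monsum a) (support_monsum b), SBW,
    Finset.sum_image (fun x hx y hy h => (nuBW_inj h01 h).1)]
  refine Finset.sum_congr rfl fun k hk => ?_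
  rw [coeff_monsum h01 a hk, coeff_monsum h01 b hk, nuBW_prod_factorial h01]

lemma nuBW_add0 (n j m : ℕ) : nuBW n j m + Finsupp.single 0 1 = nuBW n (j+1) m := by
  simp only [nuBW, Finsupp.single_add]
  abel

lemma nuBW_add1 (n j m : ℕ) : nuBW n j m + Finsupp.single 1 1 = nuBW n j (m+1) := by
  simp only [nuBW, Finsupp.single_add]
  abel

lemma monomial_mul_CX (n : ℕ) (μ : Fin (n+1) →₀ ℕ) (a b : ℝ) (i : Fin (n+1)) :
    (monomial μ a : MvPolynomial (Fin (n+1)) ℝ) * (C b * X i)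
      = monomial (μ + Finsupp.single i 1) (a * b) := by
  rw [show (X i : MvPolynomial (Fin (n+1)) ℝ) = monomial (Finsupp.single i 1) 1 by
    rw [← X_pow_eq_monomial, pow_one], C_mul_monomial, monomial_mul]
  congr 1
  ring

lemma derivExpand (n d : ℕ) (hd : 2 ≤ d) (t : ℝ) :
    veroneseCurveDeriv n d t
      = ∑ k ∈ range (d+1), monomial (nuBW n k (d-k)) (DBW d k t) := by
  have hsd : Real.sqrt d ≠ 0 := Real.sqrt_ne_zero'.mpr (by positivity)
  have hss : Real.sqrt d * Real.sqrt d = (d : ℝ) := Real.mul_self_sqrt (by positivity)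
  have hd1 : d - 1 + 1 = d := by omega
  set c := Real.cos (t / Real.sqrt d)
  set s := Real.sin (t / Real.sqrt d)
  rw [veroneseCurveDeriv, pow_expand n c s (d-1), hd1]
  rw [Finset.sum_mul]
  have expand1 : ∀ j, (monomial (nuBW n j (d-1-j)) (((d-1).choose j : ℝ) * c^j * s^(d-1-j))
        : MvPolynomial (Fin (n+1)) ℝ) * (C (-s) * X 0 + C c * X 1)
      = monomial (nuBW n (j+1) (d-1-j)) (((d-1).choose j : ℝ) * c^j * s^(d-1-j) * (-s))
        + monomial (nuBW n j ((d-1-j)+1)) (((d-1).choose j : ℝ) * c^j * s^(d-1-j) * c) := by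
    intro j
    rw [mul_add, monomial_mul_CX, monomial_mul_CX, nuBW_add0, nuBW_add1]
  rw [Finset.sum_congr rfl fun j _ => expand1 j, Finset.sum_add_distrib, smul_add,
    Finset.smul_sum, Finset.smul_sum]
  have hsplit : ∀ k, (monomial (nuBW n k (d-k)) (DBW d k t) : MvPolynomial (Fin (n+1)) ℝ)
      = monomial (nuBW n k (d-k)) (((d.choose k : ℝ) / Real.sqrt d) * (-(k:ℝ) * c^(k-1) * s^((d-k)+1)))
        + monomial (nuBW n k (d-k)) (((d.choose k : ℝ) / Real.sqrt d) * (((d-k : ℕ) : ℝ) * c^(k+1) * s^(d-k-1))) := by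
    intro k
    rw [← map_add, DBW]
    congr 1
    ring
  rw [Finset.sum_congr rfl fun k _ => hsplit k, Finset.sum_add_distrib]
  congr 1
  · rw [Finset.sum_range_succ' (fun k => (monomial (nuBW n k (d-k))
        (((d.choose k : ℝ) / Real.sqrt d) * (-(k:ℝ) * c^(k-1) * s^((d-k)+1))) : MvPolynomial (Fin (n+1)) ℝ)) d]
    simp only [Nat.cast_zero, neg_zero, zero_mul, mul_zero, map_zero, add_zero]
    refine Finset.sum_congr rfl fun j hj => ?_
    have hjd : j < d := Finset.mem_range.mp hj
    rw [smul_monomial]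
    have h1 : d - (j+1) = d - 1 - j := by omega
    have h3 : d - 1 - j + 1 = d - j := by omega
    rw [h1]
    congr 1
    have hn1 : d.choose (j+1) * (j+1) = d * ((d-1).choose j) := by
      have h := Nat.add_one_mul_choose_eq (d-1) j
      rw [hd1] at h
      exact h.symm
    have hch : (d.choose (j+1) : ℝ) * ((j:ℝ)+1) = (d : ℝ) * ((d-1).choose j) := by
      exact_mod_cast hn1
    rw [pow_succ, smul_eq_mul, div_mul_eq_mul_div, eq_div_iff hsd]
    simp only [Nat.add_sub_cancel]
    push_cast
    linear_combination (-(((d-1).choose j : ℝ) * c^j * s^(d-1-j) * s)) * hss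
      + (c^j * s^(d-1-j) * s) * hch
  · rw [Finset.sum_range_succ (fun k => (monomial (nuBW n k (d-k))
        (((d.choose k : ℝ) / Real.sqrt d) * (((d-k : ℕ) : ℝ) * c^(k+1) * s^(d-k-1))) : MvPolynomial (Fin (n+1)) ℝ))]
    simp only [Nat.sub_self, Nat.cast_zero, zero_mul, mul_zero, map_zero, add_zero]
    refine Finset.sum_congr rfl fun j hj => ?_
    have hjd : j < d := Finset.mem_range.mp hj
    rw [smul_monomial]
    have h3 : d - 1 - j + 1 = d - j := by omega
    have h4 : d - j - 1 = d - 1 - j := by omega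
    rw [h3]
    congr 1
    have hnat : d.choose j * (d - j) = d * ((d-1).choose j) := by
      rw [← Nat.choose_succ_right_eq d j]
      have h := Nat.add_one_mul_choose_eq (d-1) j
      rw [hd1] at h
      exact h.symm
    have hch : (d.choose j : ℝ) * ((d - j : ℕ) : ℝ) = (d : ℝ) * ((d-1).choose j) := by
      exact_mod_cast hnat
    rw [h4, pow_succ, smul_eq_mul, div_mul_eq_mul_div, eq_div_iff hsd]
    linear_combination ((((d-1).choose j : ℝ) * (c^j * c) * s^(d-1-j))) * hss
      - (c^j * c * s^(d-1-j)) * hch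

lemma hasDerivAt_div_sqrt (d : ℕ) (t : ℝ) :
    HasDerivAt (fun s : ℝ => s / Real.sqrt d) (1 / Real.sqrt d) t := by
  simpa using (hasDerivAt_id t).div_const (Real.sqrt d)

lemma hasDerivAt_cos_aux (d : ℕ) (t : ℝ) :
    HasDerivAt (fun s : ℝ => Real.cos (s / Real.sqrt d))
      (-Real.sin (t / Real.sqrt d) * (1 / Real.sqrt d)) t :=
  (Real.hasDerivAt_cos _).comp t (hasDerivAt_div_sqrt d t)

lemma hasDerivAt_sin_aux (d : ℕ) (t : ℝ) :
    HasDerivAt (fun s : ℝ => Real.sin (s / Real.sqrt d))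
      (Real.cos (t / Real.sqrt d) * (1 / Real.sqrt d)) t :=
  (Real.hasDerivAt_sin _).comp t (hasDerivAt_div_sqrt d t)

lemma hasDerivAt_fk (d k : ℕ) (hd : 2 ≤ d) (t : ℝ) :
    HasDerivAt (fun s => (d.choose k : ℝ) * Real.cos (s / Real.sqrt d) ^ k
        * Real.sin (s / Real.sqrt d) ^ (d-k)) (DBW d k t) t := by
  have hs : Real.sqrt d ≠ 0 := Real.sqrt_ne_zero'.mpr (by positivity)
  have h := (((hasDerivAt_cos_aux d t).fun_pow k).fun_mul ((hasDerivAt_sin_aux d t).fun_pow (d-k))).const_mul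
    ((d.choose k : ℝ))
  have hfun : (fun y => (d.choose k : ℝ) * (Real.cos (y / Real.sqrt d) ^ k
      * Real.sin (y / Real.sqrt d) ^ (d-k)))
      = fun s => (d.choose k : ℝ) * Real.cos (s / Real.sqrt d) ^ k
        * Real.sin (s / Real.sqrt d) ^ (d-k) := by
    funext y; ring
  rw [hfun] at h
  refine h.congr_deriv ?_
  symm
  rw [DBW]
  have h2 : (Real.sqrt d)^2 = (d:ℝ) := Real.sq_sqrt (by positivity)
  field_simp
  ring_nf

/-- coefficientwise expansion of the curve -/
lemma coeff_curve {n d : ℕ} (t : ℝ) (γ : Fin (n+1) →₀ ℕ) :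
    coeff γ (veroneseCurve n d t)
      = ∑ k ∈ range (d+1), (if nuBW n k (d-k) = γ then
          (d.choose k : ℝ) * Real.cos (t / Real.sqrt d) ^ k
            * Real.sin (t / Real.sqrt d) ^ (d-k) else 0) := by
  classical
  rw [veroneseCurve, pow_expand, coeff_sum]
  exact Finset.sum_congr rfl fun k _ => coeff_monomial _ _ _

lemma coeff_hasDerivAt {n d : ℕ} (hd : 2 ≤ d) (γ : Fin (n+1) →₀ ℕ) (t : ℝ) :
    HasDerivAt (fun s => coeff γ (veroneseCurve n d s))
      (coeff γ (veroneseCurveDeriv n d t)) t := by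
  classical
  have hfun : (fun s => coeff γ (veroneseCurve n d s))
      = fun s => ∑ k ∈ range (d+1), (if nuBW n k (d-k) = γ then
          (d.choose k : ℝ) * Real.cos (s / Real.sqrt d) ^ k
            * Real.sin (s / Real.sqrt d) ^ (d-k) else 0) := funext fun s => coeff_curve s γ
  have hval : coeff γ (veroneseCurveDeriv n d t)
      = ∑ k ∈ range (d+1), (if nuBW n k (d-k) = γ then DBW d k t else 0) := by
    rw [derivExpand n d hd t, coeff_sum]
    exact Finset.sum_congr rfl fun k _ => coeff_monomial _ _ _
  rw [hfun, hval]
  refine HasDerivAt.fun_sum fun k hk => ?_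
  by_cases h : nuBW n k (d-k) = γ
  · simp only [h, if_true]
    exact hasDerivAt_fk d k hd t
  · simp only [h, if_false]
    exact hasDerivAt_const t 0

lemma supp_curve {n d : ℕ} (t : ℝ) : (veroneseCurve n d t).support ⊆ SBW n d := by
  rw [veroneseCurve, pow_expand]
  exact support_monsum _

lemma supp_deriv {n d : ℕ} (hd : 2 ≤ d) (t : ℝ) :
    (veroneseCurveDeriv n d t).support ⊆ SBW n d := by
  rw [derivExpand n d hd t]
  exact support_monsum _

lemma bwInner_eq_Bsum {n d : ℕ} {p q : MvPolynomial (Fin (n+1)) ℝ}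
    (hp : p.support ⊆ SBW n d) (hq : q.support ⊆ SBW n d) :
    bwInner n d p q = BsumBW n d p q :=
  bwInner_eq_sum hp hq

lemma wCC {d k : ℕ} (hk : k ≤ d) :
    ((k.factorial : ℝ) * ((d-k).factorial : ℝ) / (d.factorial : ℝ)) * (d.choose k) * (d.choose k)
      = (d.choose k : ℝ) := by
  have h : (d.choose k : ℝ) * (k.factorial : ℝ) * ((d-k).factorial : ℝ) = (d.factorial : ℝ) := by
    exact_mod_cast Nat.choose_mul_factorial_mul_factorial hk
  have hne : (d.factorial : ℝ) ≠ 0 := by exact_mod_cast d.factorial_ne_zero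
  field_simp
  linear_combination (d.choose k : ℝ) * h

lemma bw_curve_curve {n d : ℕ} (h01 : (0 : Fin (n+1)) ≠ 1) (t u : ℝ) :
    bwInner n d (veroneseCurve n d t) (veroneseCurve n d u)
      = Real.cos ((t - u) / Real.sqrt d) ^ d := by
  rw [veroneseCurve, veroneseCurve, pow_expand, pow_expand, bwInner_monsum h01]
  have : ∀ k ∈ range (d+1),
      ((k.factorial : ℝ) * ((d-k).factorial : ℝ) / (d.factorial : ℝ))
        * ((d.choose k : ℝ) * Real.cos (t / Real.sqrt d) ^ k * Real.sin (t / Real.sqrt d) ^ (d-k))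
        * ((d.choose k : ℝ) * Real.cos (u / Real.sqrt d) ^ k * Real.sin (u / Real.sqrt d) ^ (d-k))
      = (Real.cos (t / Real.sqrt d) * Real.cos (u / Real.sqrt d)) ^ k
          * (Real.sin (t / Real.sqrt d) * Real.sin (u / Real.sqrt d)) ^ (d-k) * (d.choose k) := by
    intro k hk
    have hk' : k ≤ d := by
      have := Finset.mem_range.mp hk; omega
    have := wCC (d := d) (k := k) hk'
    rw [mul_pow, mul_pow]
    linear_combination (Real.cos (t / Real.sqrt d) ^ k * Real.cos (u / Real.sqrt d) ^ k
      * Real.sin (t / Real.sqrt d) ^ (d-k) * Real.sin (u / Real.sqrt d) ^ (d-k)) * this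
  rw [Finset.sum_congr rfl this, ← add_pow, sub_div, Real.cos_sub]

lemma hasDerivAt_Bsum_right {n d : ℕ} (hd : 2 ≤ d) (p : MvPolynomial (Fin (n+1)) ℝ) (t : ℝ) :
    HasDerivAt (fun u => BsumBW n d p (veroneseCurve n d u))
      (BsumBW n d p (veroneseCurveDeriv n d t)) t := by
  refine HasDerivAt.fun_sum fun α _ => ?_
  have h := (coeff_hasDerivAt (n := n) hd α t).const_mul
    (((∏ i, ((α i).factorial : ℝ)) / (d.factorial : ℝ)) * coeff α p)
  simpa [mul_assoc] using h

lemma hasDerivAt_Bsum_left {n d : ℕ} (hd : 2 ≤ d) (q : MvPolynomial (Fin (n+1)) ℝ) (t : ℝ) :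
    HasDerivAt (fun x => BsumBW n d (veroneseCurve n d x) q)
      (BsumBW n d (veroneseCurveDeriv n d t) q) t := by
  refine HasDerivAt.fun_sum fun α _ => ?_
  exact ((coeff_hasDerivAt (n := n) hd α t).const_mul
    ((∏ i, ((α i).factorial : ℝ)) / (d.factorial : ℝ))).mul_const (coeff α q)

lemma bw_deriv_curve {n d : ℕ} (h01 : (0 : Fin (n+1)) ≠ 1) (hd : 2 ≤ d) (t u : ℝ) :
    bwInner n d (veroneseCurveDeriv n d t) (veroneseCurve n d u)
      = -Real.sqrt d * Real.cos ((t - u) / Real.sqrt d) ^ (d-1)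
          * Real.sin ((t - u) / Real.sqrt d) := by
  have hsd : Real.sqrt d ≠ 0 := Real.sqrt_ne_zero'.mpr (by positivity)
  have hss : Real.sqrt d * Real.sqrt d = (d : ℝ) := Real.mul_self_sqrt (by positivity)
  have e1 : (fun x => BsumBW n d (veroneseCurve n d x) (veroneseCurve n d u))
      = fun x => Real.cos ((x - u) / Real.sqrt d) ^ d := by
    funext x
    rw [← bwInner_eq_Bsum (supp_curve x) (supp_curve u), bw_curve_curve h01]
  have h1 := hasDerivAt_Bsum_left (n := n) hd (veroneseCurve n d u) t
  rw [e1] at h1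
  have hin : HasDerivAt (fun x : ℝ => (x - u) / Real.sqrt d) (1 / Real.sqrt d) t := by
    simpa using ((hasDerivAt_id t).sub_const u).div_const (Real.sqrt d)
  have h2 : HasDerivAt (fun x => Real.cos ((x - u) / Real.sqrt d) ^ d)
      (-Real.sqrt d * Real.cos ((t - u) / Real.sqrt d) ^ (d-1)
        * Real.sin ((t - u) / Real.sqrt d)) t := by
    have h := (((Real.hasDerivAt_cos _).comp t hin).fun_pow d)
    refine h.congr_deriv ?_
    symm
    simp only [Function.comp_apply]
    field_simp
    ring_nf
    rw [Real.sq_sqrt (by positivity : (0:ℝ) ≤ (d:ℝ))]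
    ring
  have := h1.unique h2
  rw [bwInner_eq_Bsum (supp_deriv hd t) (supp_curve u), this]

lemma bw_speed {n d : ℕ} (h01 : (0 : Fin (n+1)) ≠ 1) (hd : 2 ≤ d) (t : ℝ) :
    bwInner n d (veroneseCurveDeriv n d t) (veroneseCurveDeriv n d t) = 1 := by
  have hsd : Real.sqrt d ≠ 0 := Real.sqrt_ne_zero'.mpr (by positivity)
  have e2 : (fun x => BsumBW n d (veroneseCurveDeriv n d t) (veroneseCurve n d x))
      = fun x => -Real.sqrt d * Real.cos ((t - x) / Real.sqrt d) ^ (d-1)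
          * Real.sin ((t - x) / Real.sqrt d) := by
    funext x
    rw [← bwInner_eq_Bsum (supp_deriv hd t) (supp_curve x), bw_deriv_curve h01 hd]
  have h1 := hasDerivAt_Bsum_right (n := n) hd (veroneseCurveDeriv n d t) t
  rw [e2] at h1
  have hin : HasDerivAt (fun x : ℝ => (t - x) / Real.sqrt d) (-1 / Real.sqrt d) t := by
    simpa using ((hasDerivAt_id t).const_sub t).div_const (Real.sqrt d)
  have h2 : HasDerivAt (fun x => -Real.sqrt d * Real.cos ((t - x) / Real.sqrt d) ^ (d-1)
      * Real.sin ((t - x) / Real.sqrt d)) 1 t := by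
    have h := ((((Real.hasDerivAt_cos _).comp t hin).fun_pow (d-1)).fun_mul
        ((Real.hasDerivAt_sin _).comp t hin)).const_mul (-Real.sqrt d)
    simp only [Function.comp] at h
    have hfun2 : (fun y => -Real.sqrt d * (Real.cos ((t - y) / Real.sqrt d) ^ (d-1)
        * Real.sin ((t - y) / Real.sqrt d)))
        = fun x => -Real.sqrt d * Real.cos ((t - x) / Real.sqrt d) ^ (d-1)
          * Real.sin ((t - x) / Real.sqrt d) := by
      funext y; ring
    rw [hfun2] at h
    refine h.congr_deriv ?_
    symm
    simp [sub_self, zero_div]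
    field_simp
  have := h1.unique h2
  rw [bwInner_eq_Bsum (supp_deriv hd t) (supp_deriv hd t), this]

lemma hasDerivAt_pow_t0 (d p q : ℕ) :
    HasDerivAt (fun t => Real.cos (t / Real.sqrt d) ^ p * Real.sin (t / Real.sqrt d) ^ q)
      (if q = 1 then 1 / Real.sqrt d else 0) 0 := by
  have h := ((hasDerivAt_cos_aux d 0).fun_pow p).fun_mul ((hasDerivAt_sin_aux d 0).fun_pow q)
  refine h.congr_deriv ?_
  symm
  rcases q with _ | _ | q <;> simp [zero_div]

lemma hasDerivAt_DBW {d k : ℕ} (hd : 2 ≤ d) (hk : k ≤ d) :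
    HasDerivAt (DBW d k) (pfunBW d k) 0 := by
  have hsd : Real.sqrt d ≠ 0 := Real.sqrt_ne_zero'.mpr (by positivity)
  have hss : Real.sqrt d * Real.sqrt d = (d : ℝ) := Real.mul_self_sqrt (by positivity)
  have hfun : DBW d k = fun t =>
      ((d.choose k : ℝ) / Real.sqrt d) *
        ((-(k:ℝ)) * (Real.cos (t / Real.sqrt d) ^ (k-1) * Real.sin (t / Real.sqrt d) ^ ((d-k)+1))
          + ((d-k : ℕ) : ℝ) * (Real.cos (t / Real.sqrt d) ^ (k+1) * Real.sin (t / Real.sqrt d) ^ (d-k-1))) := by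
    funext t; rw [DBW]; ring
  rw [hfun]
  have h := (((hasDerivAt_pow_t0 d (k-1) ((d-k)+1)).const_mul (-(k:ℝ))).fun_add
    ((hasDerivAt_pow_t0 d (k+1) (d-k-1)).const_mul ((d-k : ℕ) : ℝ))).const_mul
    ((d.choose k : ℝ) / Real.sqrt d)
  refine h.congr_deriv ?_
  symm
  by_cases h1 : k = d
  · rw [h1, pfunBW, if_neg (by omega), if_pos rfl]
    rw [Nat.sub_self, if_pos rfl, if_neg (by omega), Nat.choose_self]
    push_cast
    field_simp
    rw [Real.sq_sqrt (Nat.cast_nonneg d)]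
    ring
  · by_cases h2 : k = d - 2
    · obtain ⟨e, rfl⟩ : ∃ e, d = e + 2 := ⟨d - 2, by omega⟩
      have h2' : k = e := by omega
      rw [h2', pfunBW, if_pos (by omega)]
      rw [show e + 2 - e = 2 by omega]
      norm_num
      have hsymm : (e+2).choose e = (e+2).choose 2 := by
        rw [show e = e+2-2 by omega]
        exact Nat.choose_symm (by omega)
      have h5 : (e+2).choose 2 * 2 * e.factorial = (e+2) * ((e+1) * e.factorial) := by
        have h6 := Nat.choose_mul_factorial_mul_factorial (show 2 ≤ e+2 by omega)
        rw [show e+2-2 = e by omega] at h6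
        calc (e+2).choose 2 * 2 * e.factorial
            = (e+2).choose 2 * Nat.factorial 2 * e.factorial := by norm_num [Nat.factorial]
          _ = (e+2).factorial := h6
          _ = (e+2) * ((e+1) * e.factorial) := by
              rw [show e+2 = (e+1)+1 from rfl, Nat.factorial_succ, Nat.factorial_succ]
      have hch : (e+2).choose 2 * 2 = (e+2) * (e+1) := by
        have hpos := Nat.factorial_pos e
        rw [← mul_assoc (e+2) (e+1) e.factorial] at h5
        exact Nat.eq_of_mul_eq_mul_right hpos h5
      have hcc : ((e+2).choose e : ℝ) * 2 = ((e+2):ℝ) * ((e:ℝ)+1) := by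
        rw [hsymm]
        exact_mod_cast hch
      push_cast
      field_simp
      rw [Real.sq_sqrt (by positivity)]
      nlinarith [hcc, hss]
    · rw [pfunBW, if_neg h2, if_neg h1]
      rw [if_neg (by omega), if_neg (by omega)]
      simp

lemma sum_single_mon {n d : ℕ} (c : ℕ) (hc : c ∈ range (d+1)) (v : ℝ) :
    (∑ k ∈ range (d+1), monomial (nuBW n k (d-k)) (if k = c then v else 0)
      : MvPolynomial (Fin (n+1)) ℝ) = monomial (nuBW n c (d-c)) v := by
  classical
  have : ∀ k, (monomial (nuBW n k (d-k)) (if k = c then v else 0) : MvPolynomial (Fin (n+1)) ℝ)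
      = if k = c then monomial (nuBW n k (d-k)) v else 0 := by
    intro k
    split <;> simp
  rw [Finset.sum_congr rfl fun k _ => this k, Finset.sum_ite_eq' (range (d+1)) c
    (fun k => (monomial (nuBW n k (d-k)) v : MvPolynomial (Fin (n+1)) ℝ)), if_pos hc]

lemma P_expand {n d : ℕ} (hd : 2 ≤ d) :
    (((d : ℝ) - 1) • (X 0 ^ (d - 2) * X 1 ^ 2) - X 0 ^ d : MvPolynomial (Fin (n+1)) ℝ)
      = ∑ k ∈ range (d+1), monomial (nuBW n k (d-k)) (pfunBW d k) := by
  classical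
  have hsplit : ∀ k, pfunBW d k
      = (if k = d-2 then (d:ℝ)-1 else 0) + (if k = d then (-1:ℝ) else 0) := by
    intro k
    rw [pfunBW]
    rcases eq_or_ne k (d-2) with h1 | h1
    · rw [if_pos h1, if_pos h1, if_neg (by omega), add_zero]
    · rw [if_neg h1, if_neg h1, zero_add]
  rw [Finset.sum_congr rfl fun k _ => by rw [hsplit k, map_add], Finset.sum_add_distrib,
    sum_single_mon (d-2) (by simp) ((d:ℝ)-1), sum_single_mon d (by simp) (-1 : ℝ)]
  have e1 : (X 0 ^ (d-2) * X 1 ^ 2 : MvPolynomial (Fin (n+1)) ℝ)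
      = monomial (nuBW n (d-2) 2) 1 := by
    rw [X_pow_eq_monomial, X_pow_eq_monomial, monomial_mul, nuBW]
    norm_num
  have e2 : (X 0 ^ d : MvPolynomial (Fin (n+1)) ℝ) = monomial (nuBW n d (d-d)) 1 := by
    rw [X_pow_eq_monomial]
    congr 1
    simp [nuBW]
  rw [e1, e2, smul_monomial, smul_eq_mul, mul_one, show d - (d-2) = 2 by omega]
  rw [sub_eq_add_neg, ← map_neg]

lemma c0_expand {n d : ℕ} :
    veroneseCurve n d 0
      = ∑ k ∈ range (d+1), monomial (nuBW n k (d-k))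
          ((d.choose k : ℝ) * 1^k * 0^(d-k)) := by
  have h1 : Real.cos ((0:ℝ) / Real.sqrt d) = 1 := by simp
  have h2 : Real.sin ((0:ℝ) / Real.sqrt d) = 0 := by simp
  rw [veroneseCurve, h1, h2, pow_expand]

lemma bw_P_c0 {n d : ℕ} (h01 : (0 : Fin (n+1)) ≠ 1) (hd : 2 ≤ d) :
    bwInner n d (((d : ℝ) - 1) • (X 0 ^ (d - 2) * X 1 ^ 2) - X 0 ^ d)
      (veroneseCurve n d 0) = -1 := by
  rw [P_expand hd, c0_expand, bwInner_monsum h01, Finset.sum_eq_single d]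
  · rw [Nat.sub_self]
    have hne : ((d.factorial : ℝ)) ≠ 0 := by exact_mod_cast d.factorial_ne_zero
    simp [pfunBW, (by omega : ¬ d = d - 2), Nat.factorial, hne]
    omega
  · intro k hk hkd
    have hlt : k < d := by
      have := Finset.mem_range.mp hk; omega
    have : (0:ℝ)^(d-k) = 0 := zero_pow (by omega)
    simp [this]
  · intro h
    exact absurd (Finset.self_mem_range_succ d) h

lemma bw_orth {n d : ℕ} (h01 : (0 : Fin (n+1)) ≠ 1) (hd : 2 ≤ d) :
    bwInner n d ((((d : ℝ) - 1) • (X 0 ^ (d - 2) * X 1 ^ 2) - X 0 ^ d) + veroneseCurve n d 0)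
      ((((d : ℝ) - 1) • (X 0 ^ (d - 2) * X 1 ^ 2) - X 0 ^ d) + veroneseCurve n d 0)
      = 2 * ((d : ℝ) - 1) / d := by
  obtain ⟨e, rfl⟩ : ∃ e, d = e + 2 := ⟨d - 2, by omega⟩
  have hexp : (((e + 2 : ℕ) : ℝ) - 1) • (X 0 ^ (e + 2 - 2) * X 1 ^ 2) - X 0 ^ (e + 2)
        + veroneseCurve n (e + 2) 0
      = ∑ k ∈ range ((e + 2) + 1), monomial (nuBW n k ((e + 2) - k))
          (pfunBW (e + 2) k + (((e + 2).choose k : ℝ) * 1 ^ k * 0 ^ ((e + 2) - k))) := by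
    rw [P_expand hd, c0_expand, ← Finset.sum_add_distrib]
    exact Finset.sum_congr rfl fun k _ => (map_add _ _ _).symm
  rw [hexp, bwInner_monsum h01, Finset.sum_eq_single e]
  · have h2 : e + 2 - e = 2 := by omega
    rw [h2]
    have hp : pfunBW (e + 2) e = ((e:ℝ) + 1) := by
      rw [pfunBW, if_pos (by omega)]
      push_cast
      ring
    rw [hp]
    have hfac : (((e + 2).factorial : ℝ)) = ((e + 2 : ℕ) : ℝ) * (((e + 1 : ℕ) : ℝ) * (e.factorial : ℝ)) := by
      rw [show e + 2 = (e + 1) + 1 from rfl, Nat.factorial_succ, Nat.factorial_succ]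
      push_cast
      ring
    have hne : ((e.factorial : ℝ)) ≠ 0 := by exact_mod_cast e.factorial_ne_zero
    rw [hfac]
    norm_num
    field_simp
    ring
  · intro k hk hke
    rcases eq_or_ne k (e + 2) with h2 | h2
    · subst h2
      rw [Nat.sub_self]
      have hp : pfunBW (e + 2) (e + 2) = -1 := by
        rw [pfunBW, if_neg (by omega), if_pos rfl]
      rw [hp]
      simp
    · have hlt : k < e + 2 := by
        have := Finset.mem_range.mp hk; omega
      have hz : (0:ℝ) ^ (e + 2 - k) = 0 := zero_pow (by omega)
      have hp : pfunBW (e + 2) k = 0 := by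
        rw [pfunBW, if_neg (by omega), if_neg h2]
      rw [hp, hz]
      ring
  · intro h
    exact absurd (Finset.mem_range.mpr (by omega)) h

/-- For `n ≥ 1`, `d ≥ 2`, the curve `c(t) = (cos(t/√d)x₀ + sin(t/√d)x₁)^d`
lies on the Bombieri–Weyl unit sphere and is a unit-speed curve.  Moreover
`c''(0) = -x₀^d + (d-1)x₀^{d-2}x₁²`, `⟨c''(0), c(0)⟩_BW = -1`, and the component of `c''(0)`
orthogonal to `c(0)` has Bombieri–Weyl norm `√(2(d-1)/d)`. -/
theorem veronese_curve_second_derivative (n d : ℕ) (hn : 1 ≤ n) (hd : 2 ≤ d) :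
    (∀ t, bwInner n d (veroneseCurve n d t) (veroneseCurve n d t) = 1) ∧
    (∀ t, (∀ γ : Fin (n + 1) →₀ ℕ,
        HasDerivAt (fun s => coeff γ (veroneseCurve n d s))
          (coeff γ (veroneseCurveDeriv n d t)) t) ∧
      bwInner n d (veroneseCurveDeriv n d t) (veroneseCurveDeriv n d t) = 1) ∧
    (∀ γ : Fin (n + 1) →₀ ℕ,
      deriv (fun t => deriv (fun s => coeff γ (veroneseCurve n d s)) t) 0
        = coeff γ (((d : ℝ) - 1) • (X 0 ^ (d - 2) * X 1 ^ 2)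
            - (X 0 ^ d : MvPolynomial (Fin (n + 1)) ℝ))) ∧
    bwInner n d (((d : ℝ) - 1) • (X 0 ^ (d - 2) * X 1 ^ 2) - X 0 ^ d) (veroneseCurve n d 0)
      = -1 ∧
    Real.sqrt (bwInner n d
        ((((d : ℝ) - 1) • (X 0 ^ (d - 2) * X 1 ^ 2) - X 0 ^ d)
          - bwInner n d (((d : ℝ) - 1) • (X 0 ^ (d - 2) * X 1 ^ 2) - X 0 ^ d)
              (veroneseCurve n d 0) • veroneseCurve n d 0)
        ((((d : ℝ) - 1) • (X 0 ^ (d - 2) * X 1 ^ 2) - X 0 ^ d)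
          - bwInner n d (((d : ℝ) - 1) • (X 0 ^ (d - 2) * X 1 ^ 2) - X 0 ^ d)
              (veroneseCurve n d 0) • veroneseCurve n d 0))
      = Real.sqrt (2 * ((d : ℝ) - 1) / d) := by
  have h01 : (0 : Fin (n+1)) ≠ 1 := by
    simp [Fin.ext_iff, Fin.val_one']
    omega
  refine ⟨?_, ?_, ?_, ?_, ?_⟩
  · intro t
    rw [bw_curve_curve h01 t t]
    simp
  · intro t
    exact ⟨fun γ => coeff_hasDerivAt hd γ t, bw_speed h01 hd t⟩
  · intro γ
    have hd1 : ∀ x, deriv (fun s => coeff γ (veroneseCurve n d s)) x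
        = coeff γ (veroneseCurveDeriv n d x) := fun x => (coeff_hasDerivAt hd γ x).deriv
    simp only [hd1]
    have hfun : (fun x => coeff γ (veroneseCurveDeriv n d x))
        = fun x => ∑ k ∈ range (d+1), (if nuBW n k (d-k) = γ then DBW d k x else 0) := by
      funext x
      rw [derivExpand n d hd x, coeff_sum]
      exact Finset.sum_congr rfl fun k _ => coeff_monomial _ _ _
    rw [hfun]
    have hder : HasDerivAt (fun x => ∑ k ∈ range (d+1),
        (if nuBW n k (d-k) = γ then DBW d k x else 0))
        (∑ k ∈ range (d+1), (if nuBW n k (d-k) = γ then pfunBW d k else 0)) 0 := by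
      refine HasDerivAt.fun_sum fun k hk => ?_
      by_cases h : nuBW n k (d-k) = γ
      · simp only [if_pos h]
        exact hasDerivAt_DBW hd (by have := Finset.mem_range.mp hk; omega)
      · simp only [if_neg h]
        exact hasDerivAt_const 0 0
    rw [hder.deriv, P_expand hd, coeff_sum]
    exact Finset.sum_congr rfl fun k _ => (coeff_monomial _ _ _).symm
  · exact bw_P_c0 h01 hd
  · have h4 := bw_P_c0 (n := n) (d := d) h01 hd
    rw [h4]
    have heq : (((d : ℝ) - 1) • (X 0 ^ (d - 2) * X 1 ^ 2) - X 0 ^ d)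
          - (-1 : ℝ) • veroneseCurve n d 0
        = (((d : ℝ) - 1) • (X 0 ^ (d - 2) * X 1 ^ 2) - X 0 ^ d) + veroneseCurve n d 0 := by
      rw [neg_one_smul, sub_neg_eq_add]
    rw [heq, bw_orth h01 hd]
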